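/- Let a > 0, let o ∈ ℝ², and let t, t′ ∈ ℝ² be points with a ≤ ‖o − t‖ ≤ (5/2)a and a ≤ ‖o − t′‖ ≤ (5/2)a, such that the angle between the vectors t − o and t′ − o is at most π/4. If r_t ≥ a and r_{t′} ≥ a, then ‖t − t′‖ ≤ 2a ≤ r_t + r_{t′}, so the disks D(t, r_t) and D(t′, r_{t′}) intersect. -/
import Mathlib

/-- Middle region clique: two sites in the annulus with radii `[a, (5/2)a]`
around `o`, seen from `o` under an angle of at most `π/4`, are at distance at
most `2a`, which is at most the sum of their (≥ a) radii. -/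
theorem middle_region_clique
    (a : ℝ) (ha : 0 < a) (o t t' : EuclideanSpace ℝ (Fin 2))
    (ht₁ : a ≤ dist o t) (ht₂ : dist o t ≤ (5/2) * a)
    (ht'₁ : a ≤ dist o t') (ht'₂ : dist o t' ≤ (5/2) * a)
    (hangle : EuclideanGeometry.angle t o t' ≤ Real.pi / 4)
    (rt rt' : ℝ) (hrt : a ≤ rt) (hrt' : a ≤ rt') :
    dist t t' ≤ 2 * a ∧ 2 * a ≤ rt + rt' := by
  refine ⟨?_, by linarith⟩
  have hlaw := EuclideanGeometry.law_cos t o t'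
  have hang0 := EuclideanGeometry.angle_nonneg t o t'
  have hcos : Real.cos (Real.pi / 4) ≤ Real.cos (EuclideanGeometry.angle t o t') :=
    Real.cos_le_cos_of_nonneg_of_le_pi hang0 (by linarith [Real.pi_gt_three]) hangle
  rw [Real.cos_pi_div_four] at hcos
  have hcos1 : Real.cos (EuclideanGeometry.angle t o t') ≤ 1 :=
    Real.cos_le_one _
  have h2 : (1.414 : ℝ) ≤ Real.sqrt 2 := by
    rw [show (1.414:ℝ) = Real.sqrt (1.414^2) by rw [Real.sqrt_sq]; norm_num]
    exact Real.sqrt_le_sqrt (by norm_num)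
  have hsq : Real.sqrt 2 ^ 2 = 2 := Real.sq_sqrt (by norm_num)
  have hd1 : dist t o = dist o t := dist_comm _ _
  have hd2 : dist t' o = dist o t' := dist_comm _ _
  rw [hd1, hd2] at hlaw
  have hsqle : dist t t' ^ 2 ≤ (2 * a) ^ 2 := by
    rw [sq, sq, hlaw]
    nlinarith [mul_pos (lt_of_lt_of_le ha ht₁) (lt_of_lt_of_le ha ht'₁),
      mul_nonneg (mul_nonneg (dist_nonneg : (0:ℝ) ≤ dist o t) (dist_nonneg : (0:ℝ) ≤ dist o t'))
        (sub_nonneg.mpr hcos),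
      sq_nonneg (dist o t - dist o t'), sq_nonneg (dist o t + dist o t' - 7/2 * a)]
  nlinarith [dist_nonneg (x := t) (y := t'), hsqle]
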